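/- Let n ∈ ℕ and j ∈ {0,…,n} with n + j even. Then the square of the normalized associated Legendre function at zero satisfies (2n+1)/(2π² sqrt((n+1)² - j²)) ≤ |P̃_n^j(0)|² ≤ (2n+1)/(4π sqrt((n+1)² - j²)). -/
import Mathlib


open Real
open scoped Nat

/-- The square `|P̃_n^j(0)|²` of the normalized associated Legendre function at zero,
for `n + j` even. -/
noncomputable def ptildeSq (n j : ℕ) : ℝ :=
  (2 * n + 1) / (4 * Real.pi) *
    ((Nat.doubleFactorial (n - j - 1) * Nat.doubleFactorial (n + j - 1) : ℝ) /
      (Nat.doubleFactorial (n - j) * Nat.doubleFactorial (n + j) : ℝ))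

lemma dfac_sq_upper (p : ℕ) :
    ((2 * p - 1)‼ : ℝ) ^ 2 * (2 * p + 1) ≤ ((2 * p)‼ : ℝ) ^ 2 := by
  induction p with
  | zero => norm_num [Nat.doubleFactorial]
  | succ p ih =>
    have e1 : 2 * (p + 1) - 1 = 2 * p + 1 := by omega
    have e2 : 2 * (p + 1) = 2 * p + 2 := by omega
    rw [e1, e2]
    have h1 : ((2 * p + 1)‼ : ℕ) = (2 * p + 1) * (2 * p - 1)‼ :=
      Nat.doubleFactorial_add_one (2 * p)
    have h2 : ((2 * p + 2)‼ : ℕ) = (2 * p + 2) * (2 * p)‼ :=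
      Nat.doubleFactorial_add_two (2 * p)
    have hA : (0:ℝ) ≤ ((2 * p - 1)‼ : ℝ) := by positivity
    push_cast [h1, h2]
    have hh := mul_le_mul_of_nonneg_left ih
      (show (0:ℝ) ≤ (2 * p + 1) * (2 * p + 3) by positivity)
    nlinarith [hh, sq_nonneg ((2 * p)‼ : ℝ)]

lemma dfac_prod (p : ℕ) : (2 * p)! = (2 * p)‼ * (2 * p - 1)‼ := by
  cases p with
  | zero => rfl
  | succ p =>
    simpa [show 2 * (p + 1) - 1 = 2 * p + 1 from by omega,
      show 2 * (p + 1) = 2 * p + 1 + 1 from by omega]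
      using Nat.factorial_eq_mul_doubleFactorial (2 * p + 1)

lemma dfac_sq_lower (p : ℕ) :
    2 * ((2 * p)‼ : ℝ) ^ 2 ≤ π * ((2 * p - 1)‼ : ℝ) ^ 2 * (2 * p + 1) := by
  have hW := Real.Wallis.W_le p
  rw [Real.Wallis.W_eq_factorial_ratio] at hW
  have hb : (0:ℝ) < ((2 * p)! : ℝ) ^ 2 * (2 * p + 1) := by positivity
  rw [div_le_div_iff₀ hb two_pos] at hW
  have h2 : ((2 * p)‼ : ℝ) = 2 ^ p * (p)! := by
    exact_mod_cast congrArg (Nat.cast (R := ℝ)) (Nat.doubleFactorial_two_mul p)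
  have h1 : ((2 * p)! : ℝ) = 2 ^ p * (p)! * ((2 * p - 1)‼ : ℝ) := by
    rw [← h2]; exact_mod_cast congrArg (Nat.cast (R := ℝ)) (dfac_prod p)
  set t : ℝ := 2 ^ p * ((p)! : ℝ) with ht
  have htpos : (0:ℝ) < t := by positivity
  set R : ℝ := ((2 * p - 1)‼ : ℝ) with hR
  rw [h2]
  have key : 2 * t ^ 4 ≤ π * (t ^ 2 * R ^ 2) * (2 * p + 1) := by
    have e : ((2 * p)! : ℝ) ^ 2 = t ^ 2 * R ^ 2 := by rw [h1]; ring
    have e2 : (2:ℝ) ^ (4 * p) * ((p)! : ℝ) ^ 4 = t ^ 4 := by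
      rw [ht, mul_comm 4 p, pow_mul]; ring
    rw [e, e2] at hW
    linarith
  have ht2 : (0:ℝ) < t ^ 2 := by positivity
  have key' : 2 * t ^ 2 * t ^ 2 ≤ π * R ^ 2 * (2 * p + 1) * t ^ 2 := by
    nlinarith [key]
  exact le_of_mul_le_mul_right key' ht2

set_option maxHeartbeats 1000000 in
theorem ptildeSq_bounds (n j : ℕ) (hj : j ≤ n) (hpar : Even (n + j)) :
    (2 * n + 1) / (2 * Real.pi ^ 2 * Real.sqrt (((n : ℝ) + 1) ^ 2 - (j : ℝ) ^ 2)) ≤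
      ptildeSq n j ∧
    ptildeSq n j ≤
      (2 * n + 1) / (4 * Real.pi * Real.sqrt (((n : ℝ) + 1) ^ 2 - (j : ℝ) ^ 2)) := by
  obtain ⟨m, hm⟩ := hpar
  obtain ⟨p, q, h1, h2⟩ : ∃ p q : ℕ, n = p + q ∧ j + p = q := ⟨m - j, m, by omega, by omega⟩
  have hn : (n : ℝ) = p + q := by exact_mod_cast congrArg (Nat.cast (R := ℝ)) h1
  have hjr : (j : ℝ) + p = q := by exact_mod_cast congrArg (Nat.cast (R := ℝ)) h2
  have heq : ((n : ℝ) + 1) ^ 2 - (j : ℝ) ^ 2 = (2 * p + 1) * (2 * q + 1) := by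
    have : (j : ℝ) = q - p := by linarith
    rw [hn, this]; ring
  set s : ℝ := Real.sqrt (((n : ℝ) + 1) ^ 2 - (j : ℝ) ^ 2) with hs
  have hspos : 0 < s := Real.sqrt_pos.mpr (by rw [heq]; positivity)
  have hs2 : s ^ 2 = (2 * p + 1) * (2 * q + 1) := by
    rw [hs, Real.sq_sqrt (by rw [heq]; positivity), heq]
  set A : ℝ := ((2 * p - 1)‼ : ℝ) with hA
  set B : ℝ := ((2 * p)‼ : ℝ) with hB
  set C : ℝ := ((2 * q - 1)‼ : ℝ) with hC
  set D : ℝ := ((2 * q)‼ : ℝ) with hD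
  have hApos : 0 < A := by rw [hA]; exact_mod_cast Nat.doubleFactorial_pos _
  have hBpos : 0 < B := by rw [hB]; exact_mod_cast Nat.doubleFactorial_pos _
  have hCpos : 0 < C := by rw [hC]; exact_mod_cast Nat.doubleFactorial_pos _
  have hDpos : 0 < D := by rw [hD]; exact_mod_cast Nat.doubleFactorial_pos _
  have hup : A ^ 2 * (2 * p + 1) ≤ B ^ 2 := dfac_sq_upper p
  have hup' : C ^ 2 * (2 * q + 1) ≤ D ^ 2 := dfac_sq_upper q
  have hlo : 2 * B ^ 2 ≤ π * A ^ 2 * (2 * p + 1) := dfac_sq_lower p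
  have hlo' : 2 * D ^ 2 ≤ π * C ^ 2 * (2 * q + 1) := dfac_sq_lower q
  have hP : ptildeSq n j = (2 * n + 1) / (4 * π) * (A * C / (B * D)) := by
    unfold ptildeSq
    rw [show n - j = 2 * p from by omega, show n + j = 2 * q from by omega]
  have hp1 : (0:ℝ) < 2 * p + 1 := by positivity
  have hq1 : (0:ℝ) < 2 * q + 1 := by positivity
  constructor
  · -- lower bound
    have key : 2 / (π * s) ≤ A * C / (B * D) := by
      have hsq : (2 / (π * s)) ^ 2 ≤ (A * C / (B * D)) ^ 2 := by
        rw [div_pow, div_pow, mul_pow, mul_pow, hs2]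
        rw [div_le_div_iff₀ (by positivity) (by positivity)]
        have hmul := mul_le_mul hlo hlo' (by positivity) (by positivity)
        nlinarith [hmul]
      have h := Real.sqrt_le_sqrt hsq
      rwa [Real.sqrt_sq (by positivity), Real.sqrt_sq (by positivity)] at h
    calc (2 * (n:ℝ) + 1) / (2 * π ^ 2 * s)
        = (2 * n + 1) / (4 * π) * (2 / (π * s)) := by
          field_simp; ring
      _ ≤ (2 * n + 1) / (4 * π) * (A * C / (B * D)) := by
          apply mul_le_mul_of_nonneg_left key (by positivity)
      _ = ptildeSq n j := hP.symm
  · -- upper bound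
    have key : A * C / (B * D) ≤ 1 / s := by
      have hsq : (A * C / (B * D)) ^ 2 ≤ (1 / s) ^ 2 := by
        rw [div_pow, div_pow, mul_pow, mul_pow, hs2, one_pow]
        rw [div_le_div_iff₀ (by positivity) (by positivity)]
        have hmul := mul_le_mul hup hup' (by positivity) (by positivity)
        nlinarith [hmul]
      have h := Real.sqrt_le_sqrt hsq
      rwa [Real.sqrt_sq (by positivity), Real.sqrt_sq (by positivity)] at h
    calc ptildeSq n j = (2 * n + 1) / (4 * π) * (A * C / (B * D)) := hP
      _ ≤ (2 * n + 1) / (4 * π) * (1 / s) := by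
          apply mul_le_mul_of_nonneg_left key (by positivity)
      _ = (2 * (n:ℝ) + 1) / (4 * π * s) := by rw [mul_one_div, div_div]
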